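/- Let G be a countable group. If G admits a group homomorphism with nontrivial image into Homeo₊(ℝ), then G admits a group homomorphism with nontrivial image into the group Homeo̰₊(ℝ, 0) of germs at 0 of orientation-preserving homeomorphisms of ℝ fixing 0. -/

import Mathlib

open Filter Topology Set

def HomeoPlusReal : Subgroup (Equiv.Perm ℝ) where
  carrier := {f | Continuous f ∧ Continuous f.symm ∧ StrictMono f}
  one_mem' := by
    refine ⟨continuous_id, ?_, fun a b h => h⟩
    exact continuous_id
  mul_mem' := by
    rintro a b ⟨ha1, ha2, ha3⟩ ⟨hb1, hb2, hb3⟩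
    refine ⟨?_, ?_, ?_⟩
    · simpa [Equiv.Perm.coe_mul] using ha1.comp hb1
    · have : Continuous (⇑b.symm ∘ ⇑a.symm) := hb2.comp ha2
      simpa [Equiv.Perm.mul_def, Equiv.symm_trans_apply, Function.comp] using this
    · intro x y h
      simpa [Equiv.Perm.coe_mul] using ha3 (hb3 h)
  inv_mem' := by
    rintro a ⟨ha1, ha2, ha3⟩
    refine ⟨by exact ha2, by exact ha1, ?_⟩
    intro x y h
    have h2 := ha3.lt_iff_lt (a := a.symm x) (b := a.symm y)
    simp only [Equiv.apply_symm_apply] at h2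
    simpa using h2.mp h

/-- Data representing a local orientation-preserving homeomorphism of `ℝ`
defined on an open neighborhood `U` of `0`, fixing `0`, together with a local
inverse `G` defined on the open image neighborhood `V`. -/
structure LocalHomeoAtZero where
  F : ℝ → ℝ
  G : ℝ → ℝ
  U : Set ℝ
  V : Set ℝ
  isOpen_U : IsOpen U
  isOpen_V : IsOpen V
  mem_U : (0 : ℝ) ∈ U
  mem_V : (0 : ℝ) ∈ V
  contF : ContinuousOn F U
  contG : ContinuousOn G V
  mapsF : Set.MapsTo F U V
  mapsG : Set.MapsTo G V U
  leftInv : ∀ x ∈ U, G (F x) = x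
  rightInv : ∀ x ∈ V, F (G x) = x
  mono : StrictMonoOn F U
  fixes : F 0 = 0

namespace LocalHomeoAtZero

/-- Two local homeomorphisms are identified when they agree on some
neighborhood of `0`, i.e. they have the same germ at `0`. -/
instance setoid : Setoid LocalHomeoAtZero where
  r d e := d.F =ᶠ[nhds (0 : ℝ)] e.F
  iseqv := ⟨fun _ => Filter.EventuallyEq.refl _ _,
    fun h => h.symm, fun h h' => h.trans h'⟩

lemma G_fixes (d : LocalHomeoAtZero) : d.G 0 = 0 := by
  have h := d.leftInv 0 d.mem_U
  rw [d.fixes] at h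
  exact h

/-- The identity element. -/
def one : LocalHomeoAtZero where
  F := id
  G := id
  U := Set.univ
  V := Set.univ
  isOpen_U := isOpen_univ
  isOpen_V := isOpen_univ
  mem_U := trivial
  mem_V := trivial
  contF := continuousOn_id
  contG := continuousOn_id
  mapsF := fun x _ => trivial
  mapsG := fun x _ => trivial
  leftInv := fun x _ => rfl
  rightInv := fun x _ => rfl
  mono := fun x _ y _ h => h
  fixes := rfl

/-- Composition of local homeomorphisms. -/
def comp (d e : LocalHomeoAtZero) : LocalHomeoAtZero where
  F := d.F ∘ e.F
  G := e.G ∘ d.G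
  U := e.U ∩ e.F ⁻¹' d.U
  V := d.V ∩ d.G ⁻¹' e.V
  isOpen_U := e.contF.isOpen_inter_preimage e.isOpen_U d.isOpen_U
  isOpen_V := d.contG.isOpen_inter_preimage d.isOpen_V e.isOpen_V
  mem_U := ⟨e.mem_U, by simp only [Set.mem_preimage, e.fixes]; exact d.mem_U⟩
  mem_V := ⟨d.mem_V, by simp only [Set.mem_preimage, d.G_fixes]; exact e.mem_V⟩
  contF := d.contF.comp (e.contF.mono Set.inter_subset_left) (fun x hx => hx.2)
  contG := e.contG.comp (d.contG.mono Set.inter_subset_left) (fun x hx => hx.2)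
  mapsF := by
    rintro x ⟨hx1, hx2⟩
    refine ⟨d.mapsF hx2, ?_⟩
    simp only [Set.mem_preimage, Function.comp_apply]
    rw [d.leftInv _ hx2]
    exact e.mapsF hx1
  mapsG := by
    rintro y ⟨hy1, hy2⟩
    refine ⟨e.mapsG hy2, ?_⟩
    simp only [Set.mem_preimage, Function.comp_apply]
    rw [e.rightInv _ hy2]
    exact d.mapsG hy1
  leftInv := by
    rintro x ⟨hx1, hx2⟩
    simp only [Function.comp_apply]
    rw [d.leftInv _ hx2, e.leftInv _ hx1]
  rightInv := by
    rintro y ⟨hy1, hy2⟩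
    simp only [Function.comp_apply]
    rw [e.rightInv _ hy2, d.rightInv _ hy1]
  mono := by
    rintro x ⟨hx1, hx2⟩ y ⟨hy1, hy2⟩ hxy
    exact d.mono hx2 hy2 (e.mono hx1 hy1 hxy)
  fixes := by simp only [Function.comp_apply, e.fixes, d.fixes]

/-- Inverse of a local homeomorphism. -/
def inv (d : LocalHomeoAtZero) : LocalHomeoAtZero where
  F := d.G
  G := d.F
  U := d.V
  V := d.U
  isOpen_U := d.isOpen_V
  isOpen_V := d.isOpen_U
  mem_U := d.mem_V
  mem_V := d.mem_U
  contF := d.contG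
  contG := d.contF
  mapsF := d.mapsG
  mapsG := d.mapsF
  leftInv := d.rightInv
  rightInv := d.leftInv
  mono := by
    intro x hx y hy hxy
    rcases lt_trichotomy (d.G x) (d.G y) with h | h | h
    · exact h
    · exfalso
      have : x = y := by
        rw [← d.rightInv x hx, ← d.rightInv y hy, h]
      exact absurd this (ne_of_lt hxy)
    · exfalso
      have := d.mono (d.mapsG hy) (d.mapsG hx) h
      rw [d.rightInv x hx, d.rightInv y hy] at this
      exact absurd hxy (not_lt.mpr this.le)
  fixes := d.G_fixes

lemma comp_sound {d₁ e₁ d₂ e₂ : LocalHomeoAtZero} (h₁ : d₁ ≈ e₁) (h₂ : d₂ ≈ e₂) :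
    comp d₁ d₂ ≈ comp e₁ e₂ := by
  have hc : ContinuousAt d₂.F 0 := d₂.contF.continuousAt (d₂.isOpen_U.mem_nhds d₂.mem_U)
  have ht : Tendsto d₂.F (nhds (0 : ℝ)) (nhds (0 : ℝ)) := by
    have := hc.tendsto
    rwa [d₂.fixes] at this
  have hA : d₁.F ∘ d₂.F =ᶠ[nhds (0 : ℝ)] e₁.F ∘ d₂.F := h₁.comp_tendsto ht
  have hB : e₁.F ∘ d₂.F =ᶠ[nhds (0 : ℝ)] e₁.F ∘ e₂.F := h₂.fun_comp e₁.F
  exact hA.trans hB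

lemma inv_sound {d e : LocalHomeoAtZero} (h : d ≈ e) : inv d ≈ inv e := by
  obtain ⟨s, hs, hseq⟩ := Filter.eventuallyEq_iff_exists_mem.mp h
  obtain ⟨W, hWs, hWopen, hW0⟩ := mem_nhds_iff.mp hs
  set A : Set ℝ := d.U ∩ e.U ∩ W with hA
  have hAopen : IsOpen A := (d.isOpen_U.inter e.isOpen_U).inter hWopen
  have hA0 : (0 : ℝ) ∈ A := ⟨⟨d.mem_U, e.mem_U⟩, hW0⟩
  set B : Set ℝ := d.V ∩ d.G ⁻¹' A with hB
  have hBopen : IsOpen B := d.contG.isOpen_inter_preimage d.isOpen_V hAopen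
  have hB0 : (0 : ℝ) ∈ B := ⟨d.mem_V, by simp only [Set.mem_preimage, d.G_fixes]; exact hA0⟩
  apply Filter.eventuallyEq_of_mem (hBopen.mem_nhds hB0)
  rintro y ⟨hy1, hy2⟩
  simp only [Set.mem_preimage] at hy2
  obtain ⟨⟨hxU, hxU'⟩, hxW⟩ := hy2
  show d.G y = e.G y
  have h1 : d.F (d.G y) = y := d.rightInv y hy1
  have h2 : e.F (d.G y) = y := by rw [← hseq (hWs hxW)]; exact h1
  calc d.G y = e.G (e.F (d.G y)) := (e.leftInv _ hxU').symm
    _ = e.G y := by rw [h2]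

end LocalHomeoAtZero

/-- The group of germs at `0` of orientation-preserving local homeomorphisms of `ℝ`
fixing `0`, under composition of germs. -/
def GermHomeoPlus : Type := Quotient LocalHomeoAtZero.setoid

namespace GermHomeoPlus

instance : Group GermHomeoPlus where
  mul := Quotient.map₂ LocalHomeoAtZero.comp
    (fun _ _ h₁ _ _ h₂ => LocalHomeoAtZero.comp_sound h₁ h₂)
  one := ⟦LocalHomeoAtZero.one⟧
  inv := Quotient.map LocalHomeoAtZero.inv (fun _ _ h => LocalHomeoAtZero.inv_sound h)
  mul_assoc a b c := by
    induction a using Quotient.ind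
    induction b using Quotient.ind
    induction c using Quotient.ind
    exact Quotient.sound (Filter.EventuallyEq.refl _ _)
  one_mul a := by
    induction a using Quotient.ind
    exact Quotient.sound (Filter.EventuallyEq.refl _ _)
  mul_one a := by
    induction a using Quotient.ind
    exact Quotient.sound (Filter.EventuallyEq.refl _ _)
  inv_mul_cancel a := by
    induction a using Quotient.ind
    rename_i d
    apply Quotient.sound
    apply Filter.eventuallyEq_of_mem (d.isOpen_U.mem_nhds d.mem_U)
    intro x hx
    exact d.leftInv x hx

end GermHomeoPlus

noncomputable section PastingConstruction

open Real

/-- A strictly monotone map `ℝ → (0,1)`. -/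
noncomputable def qMap (x : ℝ) : ℝ := ((orderIsoIooNegOneOne ℝ x : ℝ) + 1) / 2

/-- An inverse to `qMap` on `(0,1)`. -/
noncomputable def qInv (t : ℝ) : ℝ :=
  if h : 2 * t - 1 ∈ Set.Ioo (-1 : ℝ) 1 then (orderIsoIooNegOneOne ℝ).symm ⟨2 * t - 1, h⟩ else 0

lemma qMap_mem (x : ℝ) : qMap x ∈ Set.Ioo (0 : ℝ) 1 := by
  obtain ⟨h1, h2⟩ := (orderIsoIooNegOneOne ℝ x).2
  exact ⟨by unfold qMap; linarith, by unfold qMap; linarith⟩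

lemma qMap_strictMono : StrictMono qMap := by
  intro x y hxy
  have := (orderIsoIooNegOneOne ℝ).strictMono hxy
  have h2 : (orderIsoIooNegOneOne ℝ x : ℝ) < orderIsoIooNegOneOne ℝ y := this
  unfold qMap; linarith

lemma qInv_qMap (x : ℝ) : qInv (qMap x) = x := by
  have hx := (orderIsoIooNegOneOne ℝ x).2
  have he : 2 * qMap x - 1 = (orderIsoIooNegOneOne ℝ x : ℝ) := by unfold qMap; ring
  have hmem : 2 * qMap x - 1 ∈ Set.Ioo (-1 : ℝ) 1 := by rw [he]; exact hx
  rw [qInv, dif_pos hmem]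
  have : (⟨2 * qMap x - 1, hmem⟩ : Set.Ioo (-1 : ℝ) 1) = orderIsoIooNegOneOne ℝ x :=
    Subtype.ext he
  rw [this, OrderIso.symm_apply_apply]

lemma qMap_qInv {t : ℝ} (ht : t ∈ Set.Ioo (0 : ℝ) 1) : qMap (qInv t) = t := by
  have hmem : 2 * t - 1 ∈ Set.Ioo (-1 : ℝ) 1 := ⟨by linarith [ht.1], by linarith [ht.2]⟩
  rw [qInv, dif_pos hmem]
  unfold qMap
  rw [OrderIso.apply_symm_apply]
  ring

/-- The conjugated action on `(0,1)`, extended by the identity. -/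
noncomputable def sMap (f : Equiv.Perm ℝ) (t : ℝ) : ℝ :=
  if t ∈ Set.Ioo (0 : ℝ) 1 then qMap (f (qInv t)) else t

lemma sMap_mem_Ioo (f : Equiv.Perm ℝ) {t : ℝ} (ht : t ∈ Set.Ioo (0 : ℝ) 1) :
    sMap f t ∈ Set.Ioo (0 : ℝ) 1 := by
  rw [sMap, if_pos ht]; exact qMap_mem _

lemma sMap_of_not_mem (f : Equiv.Perm ℝ) {t : ℝ} (ht : t ∉ Set.Ioo (0 : ℝ) 1) :
    sMap f t = t := if_neg ht

lemma sMap_mem_Ico (f : Equiv.Perm ℝ) {t : ℝ} (ht : t ∈ Set.Ico (0 : ℝ) 1) :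
    sMap f t ∈ Set.Ico (0 : ℝ) 1 := by
  rcases eq_or_lt_of_le ht.1 with h | h
  · rw [sMap, if_neg (by rw [← h]; simp)]
    rw [← h]; exact ⟨le_refl _, one_pos⟩
  · have := sMap_mem_Ioo f ⟨h, ht.2⟩
    exact ⟨this.1.le, this.2⟩

lemma sMap_comp (f g : Equiv.Perm ℝ) (t : ℝ) : sMap f (sMap g t) = sMap (f * g) t := by
  by_cases ht : t ∈ Set.Ioo (0 : ℝ) 1
  · have h1 : sMap g t ∈ Set.Ioo (0 : ℝ) 1 := sMap_mem_Ioo g ht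
    rw [sMap, if_pos h1, sMap, if_pos ht, sMap, if_pos ht, qInv_qMap, Equiv.Perm.mul_apply]
  · rw [sMap_of_not_mem g ht, sMap_of_not_mem f ht, sMap_of_not_mem _ ht]

lemma sMap_one (t : ℝ) : sMap 1 t = t := by
  by_cases ht : t ∈ Set.Ioo (0 : ℝ) 1
  · rw [sMap, if_pos ht, Equiv.Perm.one_apply, qMap_qInv ht]
  · exact sMap_of_not_mem _ ht

lemma sMap_strictMonoOn {f : Equiv.Perm ℝ} (hf : StrictMono f) :
    StrictMonoOn (sMap f) (Set.Ico (0 : ℝ) 1) := by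
  intro t1 ht1 t2 ht2 h12
  have ht2' : t2 ∈ Set.Ioo (0 : ℝ) 1 := ⟨lt_of_le_of_lt ht1.1 h12, ht2.2⟩
  rcases eq_or_lt_of_le ht1.1 with h | h
  · rw [sMap, if_neg (by rw [← h]; simp), ← h]
    exact (sMap_mem_Ioo f ht2').1
  · have ht1' : t1 ∈ Set.Ioo (0 : ℝ) 1 := ⟨h, ht1.2⟩
    rw [sMap, if_pos ht1', sMap, if_pos ht2']
    apply qMap_strictMono
    apply hf
    -- qInv strictly monotone on Ioo 0 1
    have hm1 : 2 * t1 - 1 ∈ Set.Ioo (-1 : ℝ) 1 := ⟨by linarith [ht1'.1], by linarith [ht1'.2]⟩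
    have hm2 : 2 * t2 - 1 ∈ Set.Ioo (-1 : ℝ) 1 := ⟨by linarith [ht2'.1], by linarith [ht2'.2]⟩
    rw [qInv, dif_pos hm1, qInv, dif_pos hm2]
    exact (orderIsoIooNegOneOne ℝ).symm.strictMono (Subtype.mk_lt_mk.mpr (by linarith))

/-- The `ℤ`-periodic pasting of copies of the conjugated action. -/
noncomputable def bMap (f : Equiv.Perm ℝ) (y : ℝ) : ℝ := (⌊y⌋ : ℝ) + sMap f (Int.fract y)

lemma bMap_mem (f : Equiv.Perm ℝ) (y : ℝ) :
    bMap f y ∈ Set.Ico ((⌊y⌋ : ℝ)) ((⌊y⌋ : ℝ) + 1) := by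
  have h := sMap_mem_Ico f ⟨Int.fract_nonneg y, Int.fract_lt_one y⟩
  exact ⟨by unfold bMap; linarith [h.1], by unfold bMap; linarith [h.2]⟩

lemma bMap_floor (f : Equiv.Perm ℝ) (y : ℝ) : ⌊bMap f y⌋ = ⌊y⌋ := by
  have h := bMap_mem f y
  rw [Int.floor_eq_iff]
  exact ⟨h.1, h.2⟩

lemma bMap_fract (f : Equiv.Perm ℝ) (y : ℝ) : Int.fract (bMap f y) = sMap f (Int.fract y) := by
  rw [bMap, Int.fract_intCast_add]
  exact Int.fract_eq_self.mpr
    ⟨(sMap_mem_Ico f ⟨Int.fract_nonneg y, Int.fract_lt_one y⟩).1,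
     (sMap_mem_Ico f ⟨Int.fract_nonneg y, Int.fract_lt_one y⟩).2⟩

lemma bMap_comp (f g : Equiv.Perm ℝ) (y : ℝ) : bMap f (bMap g y) = bMap (f * g) y := by
  rw [bMap, bMap_floor, bMap_fract, sMap_comp, bMap]

lemma bMap_one (y : ℝ) : bMap 1 y = y := by
  rw [bMap, sMap_one, Int.floor_add_fract]

lemma bMap_strictMono {f : Equiv.Perm ℝ} (hf : StrictMono f) : StrictMono (bMap f) := by
  intro y1 y2 h12
  have hfl : ⌊y1⌋ ≤ ⌊y2⌋ := Int.floor_le_floor h12.le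
  rcases eq_or_lt_of_le hfl with h | h
  · have hfr : Int.fract y1 < Int.fract y2 := by
      rw [Int.fract, Int.fract, h]
      linarith
    have := sMap_strictMonoOn hf ⟨Int.fract_nonneg y1, Int.fract_lt_one y1⟩
      ⟨Int.fract_nonneg y2, Int.fract_lt_one y2⟩ hfr
    rw [bMap, bMap, h]
    linarith
  · have h1 := (bMap_mem f y1).2
    have h2 := (bMap_mem f y2).1
    have : (⌊y1⌋ : ℝ) + 1 ≤ (⌊y2⌋ : ℝ) := by
      have := Int.add_one_le_of_lt h
      exact_mod_cast this
    linarith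

/-- The pasted action on `(0,∞)` (conjugated by `exp`), extended by the identity. -/
noncomputable def pMap (f : Equiv.Perm ℝ) (x : ℝ) : ℝ :=
  if 0 < x then Real.exp (bMap f (Real.log x)) else x

lemma pMap_of_pos (f : Equiv.Perm ℝ) {x : ℝ} (hx : 0 < x) :
    pMap f x = Real.exp (bMap f (Real.log x)) := if_pos hx

lemma pMap_of_nonpos (f : Equiv.Perm ℝ) {x : ℝ} (hx : ¬ 0 < x) : pMap f x = x := if_neg hx

lemma pMap_comp (f g : Equiv.Perm ℝ) (x : ℝ) : pMap f (pMap g x) = pMap (f * g) x := by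
  by_cases hx : 0 < x
  · rw [pMap_of_pos g hx, pMap_of_pos f (Real.exp_pos _), Real.log_exp, bMap_comp,
      pMap_of_pos (f * g) hx]
  · rw [pMap_of_nonpos g hx, pMap_of_nonpos f hx, pMap_of_nonpos (f * g) hx]

lemma pMap_one (x : ℝ) : pMap 1 x = x := by
  by_cases hx : 0 < x
  · rw [pMap_of_pos 1 hx, bMap_one, Real.exp_log hx]
  · exact pMap_of_nonpos 1 hx

lemma pMap_zero (f : Equiv.Perm ℝ) : pMap f 0 = 0 := pMap_of_nonpos f (lt_irrefl 0)

lemma pMap_strictMono {f : Equiv.Perm ℝ} (hf : StrictMono f) : StrictMono (pMap f) := by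
  intro x1 x2 h12
  by_cases h1 : 0 < x1
  · have h2 : 0 < x2 := h1.trans h12
    rw [pMap_of_pos f h1, pMap_of_pos f h2]
    exact Real.exp_lt_exp.mpr (bMap_strictMono hf (Real.log_lt_log h1 h12))
  · rw [pMap_of_nonpos f h1]
    by_cases h2 : 0 < x2
    · rw [pMap_of_pos f h2]
      calc x1 ≤ 0 := not_lt.mp h1
        _ < _ := Real.exp_pos _
    · rw [pMap_of_nonpos f h2]; exact h12

lemma pMap_surjective {f : Equiv.Perm ℝ} : Function.Surjective (pMap f) := by
  intro y
  refine ⟨pMap f⁻¹ y, ?_⟩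
  rw [pMap_comp, mul_inv_cancel, pMap_one]

lemma pMap_continuous {f : Equiv.Perm ℝ} (hf : StrictMono f) : Continuous (pMap f) := by
  have h := (StrictMono.orderIsoOfSurjective (pMap f) (pMap_strictMono hf)
    pMap_surjective).continuous
  simpa [StrictMono.coe_orderIsoOfSurjective] using h

/-- The local homeomorphism at `0` associated to an element of `Homeo₊(ℝ)`. -/
noncomputable def toLocal (f : HomeoPlusReal) : LocalHomeoAtZero where
  F := pMap (f : Equiv.Perm ℝ)
  G := pMap ((f : Equiv.Perm ℝ)⁻¹)
  U := Set.univ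
  V := Set.univ
  isOpen_U := isOpen_univ
  isOpen_V := isOpen_univ
  mem_U := trivial
  mem_V := trivial
  contF := (pMap_continuous f.2.2.2).continuousOn
  contG := by
    have h : StrictMono ((f : Equiv.Perm ℝ)⁻¹ : Equiv.Perm ℝ) := by
      have := (f⁻¹ : HomeoPlusReal).2.2.2
      exact this
    exact (pMap_continuous h).continuousOn
  mapsF := fun x _ => trivial
  mapsG := fun x _ => trivial
  leftInv := fun x _ => by rw [pMap_comp, inv_mul_cancel, pMap_one]
  rightInv := fun x _ => by rw [pMap_comp, mul_inv_cancel, pMap_one]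
  mono := (pMap_strictMono f.2.2.2).strictMonoOn _
  fixes := pMap_zero _

/-- The germ homomorphism `Homeo₊(ℝ) →* GermHomeoPlus`. -/
noncomputable def toGermHom : HomeoPlusReal →* GermHomeoPlus :=
  MonoidHom.mk' (fun f => Quotient.mk LocalHomeoAtZero.setoid (toLocal f))
    (by
      intro a b
      refine Quotient.sound ?_
      apply Filter.Eventually.of_forall
      intro x
      show pMap _ x = (pMap _ ∘ pMap _) x
      rw [Function.comp_apply, pMap_comp]
      rfl)

end PastingConstruction

/-- If a countable group `G` admits a homomorphism with nontrivial image into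
`Homeo₊(ℝ)`, then it admits a homomorphism with nontrivial image into the group
`Homeo̰₊(ℝ, 0)` of germs at `0` of orientation-preserving homeomorphisms of `ℝ`
fixing `0`. -/
theorem exists_nontrivial_hom_germ_of_homeoPlus {G : Type*} [Group G] [Countable G]
    (h : ∃ ψ : G →* HomeoPlusReal, ∃ g : G, ψ g ≠ 1) :
    ∃ φ : G →* GermHomeoPlus, ∃ g : G, φ g ≠ 1 := by
  obtain ⟨ψ, g, hg⟩ := h
  refine ⟨toGermHom.comp ψ, g, ?_⟩
  intro hC
  set f : Equiv.Perm ℝ := (ψ g : Equiv.Perm ℝ) with hf_def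
  -- extract the eventual equality with the identity
  have h1 : (Quotient.mk LocalHomeoAtZero.setoid (toLocal (ψ g)) : GermHomeoPlus) =
      Quotient.mk LocalHomeoAtZero.setoid LocalHomeoAtZero.one := hC
  have h2 : toLocal (ψ g) ≈ LocalHomeoAtZero.one := Quotient.exact h1
  have h3 : pMap f =ᶠ[nhds (0 : ℝ)] id := h2
  obtain ⟨ε, hε, hball⟩ := Metric.eventually_nhds_iff.mp h3
  -- find a point moved by f
  have hfne : f ≠ 1 := by
    intro hc
    exact hg (Subtype.ext hc)
  have hx : ∃ x₀ : ℝ, f x₀ ≠ x₀ := by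
    by_contra hcon
    push_neg at hcon
    exact hfne (Equiv.ext fun x => hcon x)
  obtain ⟨x₀, hx₀⟩ := hx
  set t₀ : ℝ := qMap x₀ with ht₀_def
  have ht₀ : t₀ ∈ Set.Ioo (0 : ℝ) 1 := qMap_mem x₀
  have hs : sMap f t₀ ≠ t₀ := by
    rw [sMap, if_pos ht₀, ht₀_def, qInv_qMap]
    intro hc
    exact hx₀ (qMap_strictMono.injective hc)
  -- choose a point close to 0 moved by pMap f
  set m : ℤ := ⌊Real.log ε⌋ - 1 with hm_def
  set y : ℝ := Real.exp ((m : ℝ) + t₀) with hy_def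
  have hy_pos : (0 : ℝ) < y := Real.exp_pos _
  have hy_lt : y < ε := by
    have h4 : (m : ℝ) + t₀ < Real.log ε := by
      have h5 : (m : ℝ) + 1 ≤ (⌊Real.log ε⌋ : ℝ) := by
        rw [hm_def]; push_cast; linarith
      have h6 : (⌊Real.log ε⌋ : ℝ) ≤ Real.log ε := Int.floor_le _
      linarith [ht₀.2]
    calc y < Real.exp (Real.log ε) := Real.exp_lt_exp.mpr h4
      _ = ε := Real.exp_log hε
  have heq : pMap f y = y := hball (by simpa [Real.dist_eq, abs_of_pos hy_pos] using hy_lt)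
  -- compute pMap f y
  have hfl : ⌊(m : ℝ) + t₀⌋ = m := by
    rw [Int.floor_intCast_add, Int.floor_eq_zero_iff.mpr ⟨ht₀.1.le, ht₀.2⟩, add_zero]
  have hfr : Int.fract ((m : ℝ) + t₀) = t₀ := by
    rw [Int.fract_intCast_add, Int.fract_eq_self.mpr ⟨ht₀.1.le, ht₀.2⟩]
  have hcomp : pMap f y = Real.exp ((m : ℝ) + sMap f t₀) := by
    rw [pMap_of_pos f hy_pos, hy_def, Real.log_exp, bMap, hfl, hfr]
  rw [hcomp, hy_def] at heq
  have := Real.exp_injective heq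
  exact hs (by linarith)
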